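/- For u, v ∈ X and finite nonempty N̂ ⊆ X with u ∉ N̂ and v ∉ N̂ ∪ {u}: c_{u,v,N̂} = min over w ∈ N̂ of (C(u, w, N̂ ∪ {u}) + c(w, v)). -/

import Mathlib

noncomputable section

/-- Sum of `c` over consecutive pairs of a list. -/
def pathCost {X : Type*} (c : X → X → ℝ) : List X → ℝ
  | [] => 0
  | [_] => 0
  | a :: b :: rest => c a b + pathCost c (b :: rest)

/-- `tourCost c v w S`: the minimum, over all lists starting at `v`, ending at `w`, and
containing each element of `S` exactly once, of the sum of `c` over consecutive pairs
(as an infimum of the finite nonempty set of such costs). -/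
def tourCost {X : Type*} (c : X → X → ℝ) (v w : X) (S : Finset X) : ℝ :=
  sInf (pathCost c '' {p : List X |
    p.head? = some v ∧ p.getLast? = some w ∧ p.Nodup ∧ ∀ x, x ∈ p ↔ x ∈ S})

/-- `interCost c u v N̂`: the minimum, over all lists starting at `u`, ending at `v`, whose
intermediate entries are exactly the elements of `N̂`, each occurring once, of the sum of `c`
over consecutive pairs. -/
def interCost {X : Type*} (c : X → X → ℝ) (u v : X) (Nh : Finset X) : ℝ :=
  sInf (pathCost c '' {p : List X |
    ∃ q : List X, p = u :: (q ++ [v]) ∧ q.Nodup ∧ ∀ x, x ∈ q ↔ x ∈ Nh})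

lemma pathCost_concat {X : Type*} (c : X → X → ℝ) :
    ∀ (l : List X) (a v : X),
      pathCost c ((a :: l) ++ [v]) = pathCost c (a :: l) + c ((a :: l).getLast (by simp)) v
  | [], a, v => by simp [pathCost]
  | b :: l, a, v => by
    have ih := pathCost_concat c l b v
    have h1 : (a :: b :: l) ++ [v] = a :: ((b :: l) ++ [v]) := by simp
    rw [h1]
    show c a b + pathCost c ((b :: l) ++ [v]) = _
    rw [ih, List.getLast_cons (by simp : (b :: l) ≠ [])]
    show _ = c a b + pathCost c (b :: l) + _
    ring

lemma finite_nodup_lists {X : Type*} [DecidableEq X] (s : Finset X) :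
    {q : List X | q.Nodup ∧ ∀ x, x ∈ q ↔ x ∈ s}.Finite := by
  apply Set.Finite.subset s.toList.permutations.finite_toSet
  rintro q ⟨hnd, hmem⟩
  simp only [Set.mem_setOf_eq, List.mem_permutations]
  exact (List.perm_ext_iff_of_nodup hnd s.nodup_toList).mpr
    (fun x => by simp [hmem x])

/-- For `u, v` and finite nonempty `N̂` with `u ∉ N̂` and `v ∉ N̂ ∪ {u}`:
`c_{u,v,N̂} = min over w ∈ N̂ of (C(u, w, N̂ ∪ {u}) + c(w, v))`. -/
theorem interCost_last_step {X : Type*} [DecidableEq X] (c : X → X → ℝ)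
    (u v : X) (Nh : Finset X) (hne : Nh.Nonempty) (hu : u ∉ Nh) (hv : v ∉ Nh) (hvu : v ≠ u) :
    interCost c u v Nh =
      Nh.inf' hne (fun w => tourCost c u w (insert u Nh) + c w v) := by
  classical
  set ISet : Set (List X) := {p : List X |
    ∃ q : List X, p = u :: (q ++ [v]) ∧ q.Nodup ∧ ∀ x, x ∈ q ↔ x ∈ Nh} with hISet
  set TSet : X → Set (List X) := fun w => {p : List X |
    p.head? = some u ∧ p.getLast? = some w ∧ p.Nodup ∧ ∀ x, x ∈ p ↔ x ∈ insert u Nh}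
    with hTSet
  -- finiteness
  have hIfin : (pathCost c '' ISet).Finite := by
    apply Set.Finite.image
    have : ISet ⊆ (fun q => u :: (q ++ [v])) '' {q : List X | q.Nodup ∧ ∀ x, x ∈ q ↔ x ∈ Nh} := by
      rintro p ⟨q, rfl, hq1, hq2⟩
      exact ⟨q, ⟨hq1, hq2⟩, rfl⟩
    exact Set.Finite.subset ((finite_nodup_lists Nh).image _) this
  have hTfin : ∀ w, (pathCost c '' TSet w).Finite := by
    intro w
    apply Set.Finite.image
    have : TSet w ⊆ {q : List X | q.Nodup ∧ ∀ x, x ∈ q ↔ x ∈ insert u Nh} := by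
      rintro p ⟨_, _, h3, h4⟩; exact ⟨h3, h4⟩
    exact Set.Finite.subset (finite_nodup_lists _) this
  -- nonemptiness
  have hInonempty : (pathCost c '' ISet).Nonempty := by
    refine ⟨pathCost c (u :: (Nh.toList ++ [v])), ⟨_, ⟨Nh.toList, rfl, Nh.nodup_toList,
      fun x => by simp⟩, rfl⟩⟩
  have hTnonempty : ∀ w ∈ Nh, (pathCost c '' TSet w).Nonempty := by
    intro w hw
    refine ⟨pathCost c (u :: ((Nh.erase w).toList ++ [w])), ⟨_, ⟨?_, ?_, ?_, ?_⟩, rfl⟩⟩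
    · rfl
    · rw [show u :: ((Nh.erase w).toList ++ [w]) = (u :: (Nh.erase w).toList) ++ [w] by simp]
      exact List.getLast?_concat
    · simp only [List.nodup_cons, List.mem_append, List.mem_singleton]
      refine ⟨?_, ?_⟩
      · rintro (h | rfl)
        · exact hu (Finset.mem_of_mem_erase (by simpa using h))
        · exact hu hw
      · rw [List.nodup_append]
        refine ⟨(Nh.erase w).nodup_toList, List.nodup_singleton _, ?_⟩
        intro x hx
        simp only [List.mem_singleton]
        intro b hb heq
        rw [hb] at heq
        rw [heq] at hx
        exact (Finset.notMem_erase w Nh) (Finset.mem_toList.mp hx)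
    · intro x
      simp only [List.mem_cons, List.mem_append, List.mem_singleton, Finset.mem_toList,
        Finset.mem_erase, Finset.mem_insert, List.not_mem_nil, or_false]
      rcases eq_or_ne x w with rfl | hxw
      · simp [hw]
      · simp [hxw]
  have htour : ∀ w, tourCost c u w (insert u Nh) = sInf (pathCost c '' TSet w) :=
    fun w => rfl
  rw [interCost]
  apply le_antisymm
  · -- sInf I ≤ inf'
    apply Finset.le_inf'
    intro w hw
    obtain ⟨p, hp, hps⟩ := Set.Nonempty.csInf_mem (hTnonempty w hw) (hTfin w)
    obtain ⟨h1, h2, h3, h4⟩ := hp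
    -- p is nonempty
    obtain ⟨q, rfl⟩ : ∃ q, p = u :: q := by
      cases p with
      | nil => simp at h1
      | cons a q =>
        have ha : a = u := by simpa using h1
        exact ⟨q, by rw [ha]⟩
    have hlast : (u :: q).getLast (by simp) = w := by
      rw [List.getLast?_eq_getLast (List.cons_ne_nil u q)] at h2
      simpa using h2
    have hmem : pathCost c ((u :: q) ++ [v]) ∈ pathCost c '' ISet := by
      refine ⟨_, ⟨q, rfl, (List.nodup_cons.mp h3).2, fun x => ?_⟩, rfl⟩
      constructor
      · intro hx
        have hxu : x ≠ u := fun h => (List.nodup_cons.mp h3).1 (h ▸ hx)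
        have := (h4 x).mp (List.mem_cons_of_mem _ hx)
        rcases Finset.mem_insert.mp this with rfl | h
        · exact absurd rfl hxu
        · exact h
      · intro hx
        have hxu : x ≠ u := fun h => hu (h ▸ hx)
        have := (h4 x).mpr (Finset.mem_insert_of_mem hx)
        rcases List.mem_cons.mp this with rfl | h
        · exact absurd rfl hxu
        · exact h
    calc sInf (pathCost c '' ISet) ≤ pathCost c ((u :: q) ++ [v]) :=
          csInf_le (Set.Finite.bddBelow hIfin) hmem
      _ = pathCost c (u :: q) + c w v := by rw [pathCost_concat, hlast]
      _ = tourCost c u w (insert u Nh) + c w v := by rw [htour, ← hps]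
  · -- inf' ≤ sInf I
    obtain ⟨p, ⟨q, rfl, hq1, hq2⟩, hps⟩ :=
      Set.Nonempty.csInf_mem hInonempty hIfin
    have hqne : q ≠ [] := by
      obtain ⟨w, hw⟩ := hne
      intro h
      exact absurd ((hq2 w).mpr hw) (by simp [h])
    set w := q.getLast hqne with hwdef
    have hwNh : w ∈ Nh := (hq2 w).mp (List.getLast_mem hqne)
    have huq : u ∉ q := fun h => hu ((hq2 u).mp h)
    have hTmem : pathCost c (u :: q) ∈ pathCost c '' TSet w := by
      refine ⟨u :: q, ⟨rfl, ?_, ?_, fun x => ?_⟩, rfl⟩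
      · rw [List.getLast?_eq_getLast (List.cons_ne_nil u q), List.getLast_cons hqne]
      · exact List.nodup_cons.mpr ⟨huq, hq1⟩
      · simp [hq2 x]
    have hlast : (u :: q).getLast (by simp) = w := List.getLast_cons hqne
    calc Nh.inf' hne (fun w => tourCost c u w (insert u Nh) + c w v)
        ≤ tourCost c u w (insert u Nh) + c w v := Finset.inf'_le _ hwNh
      _ ≤ pathCost c (u :: q) + c w v := by
          have := csInf_le (Set.Finite.bddBelow (hTfin w)) hTmem
          rw [htour]; linarith
      _ = pathCost c (u :: (q ++ [v])) := by
          rw [show u :: (q ++ [v]) = (u :: q) ++ [v] by simp, pathCost_concat, hlast]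
      _ = sInf (pathCost c '' ISet) := by rw [← hps]
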